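/- Every maximal clique of G that is not maximal in G' = G+H (a subsumed clique) is contained in some new maximal clique c ∈ C(G') \ C(G), and is a maximal clique of the graph obtained from c (viewed as a complete graph) by removing the edges of H. -/

import Mathlib

open SimpleGraph

/-- `s` is a maximal clique of the simple graph `G`. -/
def MaxClique {V : Type*} (G : SimpleGraph V) (s : Set V) : Prop :=
  G.IsClique s ∧ ∀ t : Set V, G.IsClique t → s ⊆ t → s = t

/-- The graph obtained from `G` by adding the edge `(u,v)`. -/
def addEdge {V : Type*} (G : SimpleGraph V) (u v : V) : SimpleGraph V :=
  G ⊔ SimpleGraph.fromEdgeSet {s(u, v)}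

/-- The graph obtained from `G` by adding the set of edges `H`. -/
def addEdges {V : Type*} (G : SimpleGraph V) (H : Set (Sym2 V)) : SimpleGraph V :=
  G ⊔ SimpleGraph.fromEdgeSet H

/-- The number of maximal cliques of `G`. -/
noncomputable def numMaxCliques {V : Type*} (G : SimpleGraph V) : ℕ :=
  Nat.card {s : Set V // MaxClique G s}

/-- `f k`: the maximum possible number of maximal cliques in a graph on `k` vertices. -/
noncomputable def maxNumMaxCliques (k : ℕ) : ℕ :=
  sSup {m | ∃ G : SimpleGraph (Fin k), m = numMaxCliques G}

theorem stmt_9 {V : Type*} [Fintype V] (G : SimpleGraph V) (H : Set (Sym2 V))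
    (hdisj : Disjoint H G.edgeSet) (hdiag : ∀ e ∈ H, ¬ e.IsDiag) (c' : Set V)
    (hmax : MaxClique G c') (hnot : ¬ MaxClique (addEdges G H) c') :
    ∃ c : Set V, MaxClique (addEdges G H) c ∧ ¬ MaxClique G c ∧ c' ⊆ c ∧
      MaxClique (((⊤ : SimpleGraph V).deleteEdges H).induce c) (Subtype.val ⁻¹' c') := by
  set G' := addEdges G H with hG'
  have hle : G ≤ G' := le_sup_left
  have hclique' : G'.IsClique c' := hmax.1.mono hle
  obtain ⟨c, ⟨hc, hsub⟩, hcmax⟩ :=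
    Set.Finite.exists_maximalFor id {t : Set V | G'.IsClique t ∧ c' ⊆ t}
      (Set.toFinite _) ⟨c', hclique', subset_rfl⟩
  have hMc : MaxClique G' c := by
    refine ⟨hc, fun t ht hct => ?_⟩
    exact subset_antisymm hct (hcmax ⟨ht, hsub.trans hct⟩ hct)
  refine ⟨c, hMc, ?_, hsub, ?_, ?_⟩
  · intro hM
    exact hnot (hmax.2 c hM.1 hsub ▸ hMc)
  · rintro ⟨x, hxc⟩ hx ⟨y, hyc⟩ hy hne
    have hxy : x ≠ y := fun h => hne (by simpa using h)
    have hadj : G.Adj x y := hmax.1 hx hy hxy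
    show ((⊤ : SimpleGraph V).deleteEdges H).Adj x y
    rw [SimpleGraph.deleteEdges_adj]
    exact ⟨hxy, fun hH => (hdisj.ne_of_mem hH hadj) rfl⟩
  · intro t ht hsubt
    have himg : G.IsClique (Subtype.val '' t) := by
      rintro x ⟨⟨x', hx'⟩, hxt, rfl⟩ y ⟨⟨y', hy'⟩, hyt, rfl⟩ hne
      have h2 : ((⊤ : SimpleGraph V).deleteEdges H).Adj x' y' :=
        ht hxt hyt (by simpa [Subtype.ext_iff] using hne)
      rw [SimpleGraph.deleteEdges_adj] at h2
      have hadj' : G'.Adj x' y' := hc hx' hy' hne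
      rw [hG', addEdges, SimpleGraph.sup_adj] at hadj'
      rcases hadj' with h | h
      · exact h
      · exact absurd ((SimpleGraph.fromEdgeSet_adj _).mp h).1 h2.2
    have hcsub : c' ⊆ Subtype.val '' t := fun x hx => ⟨⟨x, hsub hx⟩, hsubt hx, rfl⟩
    have heq := hmax.2 _ himg hcsub
    rw [heq]
    exact Set.preimage_image_eq t Subtype.val_injective
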